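/- Let (V,m,σ) be a Yang–Baxter algebra with m∘σ = m and σ² = id on V⊗V. Then the quantum quasi-shuffle product is twisted commutative on each V^{⊗i}⊗V^{⊗j}: ⋈_{σ(j,i)} ∘ β_{ij} = ⋈_{σ(i,j)}, where β_{ij} = T_{χ_{ij}} is the induced braiding on T(V). -/

import Mathlib

open CategoryTheory MonoidalCategory TensorProduct
noncomputable section
universe u
variable {K : Type u} [Field K]

def Tpow (M : ModuleCat.{u} K) : ℕ → ModuleCat.{u} K
  | 0 => ModuleCat.of K K
  | n+1 => Tpow M n ⊗ M

def sigR {M : ModuleCat.{u} K} (σ : M ⊗ M ⟶ M ⊗ M) : (n k : ℕ) → (Tpow M n ⟶ Tpow M n)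
  | n+2, 0 => (α_ (Tpow M n) M M).hom ≫ (Tpow M n ◁ σ) ≫ (α_ (Tpow M n) M M).inv
  | n+1, k+1 => sigR σ n k ▷ M
  | _, _ => 𝟙 _

def sigAt {M : ModuleCat.{u} K} (σ : M ⊗ M ⟶ M ⊗ M) (n i : ℕ) : Tpow M n ⟶ Tpow M n :=
  sigR σ n (n - 1 - i)

def asc {M : ModuleCat.{u} K} (σ : M ⊗ M ⟶ M ⊗ M) (n : ℕ) : (b l : ℕ) → (Tpow M n ⟶ Tpow M n)
  | _, 0 => 𝟙 _
  | b, l+1 => sigAt σ n b ≫ asc σ n (b+1) l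

def blockT {M : ModuleCat.{u} K} (σ : M ⊗ M ⟶ M ⊗ M) : (i j n : ℕ) → (Tpow M n ⟶ Tpow M n)
  | 0, _, _ => 𝟙 _
  | i+1, j, n => asc σ n (i+1) j ≫ blockT σ i j n

/-- `T(V)` as the direct sum of the tensor powers. -/
def TT (M : ModuleCat.{u} K) : Type u := DirectSum ℕ fun n => ↥(Tpow M n)

instance (M : ModuleCat.{u} K) : AddCommGroup (TT M) := by unfold TT; infer_instance
instance (M : ModuleCat.{u} K) : Module K (TT M) := by unfold TT; infer_instance

def TTc (M : ModuleCat.{u} K) : ModuleCat.{u} K := ModuleCat.of K (TT M)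

/-- the inclusion of the `n`-th tensor power into `T(V)`. -/
def iotaT (M : ModuleCat.{u} K) (n : ℕ) : Tpow M n ⟶ TTc M :=
  ModuleCat.ofHom (DirectSum.lof K ℕ (fun k => ↥(Tpow M k)) n : ↥(Tpow M n) →ₗ[K] TT M)

/-- concatenation on the right by one tensor factor, `T(V) ⊗ V → T(V)`. -/
def concatR (M : ModuleCat.{u} K) : TTc M ⊗ M ⟶ TTc M :=
  ModuleCat.ofHom ((DirectSum.toModule K ℕ (TT M) fun n =>
      (DirectSum.lof K ℕ (fun k => ↥(Tpow M k)) (n+1) :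
        ↥(Tpow M n) ⊗[K] ↥M →ₗ[K] TT M)) ∘ₗ
    (TensorProduct.directSumLeft K K (fun n => ↥(Tpow M n)) ↥M).toLinearMap :
    ↥(TTc M ⊗ M) →ₗ[K] TT M)

/-- `σ ⊗ id` on `(M ⊗ M) ⊗ M`. -/
def w1 {M : ModuleCat.{u} K} (σ : M ⊗ M ⟶ M ⊗ M) : (M ⊗ M) ⊗ M ⟶ (M ⊗ M) ⊗ M := σ ▷ M

/-- `id ⊗ σ` on `(M ⊗ M) ⊗ M`. -/
def w2 {M : ModuleCat.{u} K} (σ : M ⊗ M ⟶ M ⊗ M) : (M ⊗ M) ⊗ M ⟶ (M ⊗ M) ⊗ M :=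
  (α_ M M M).hom ≫ (M ◁ σ) ≫ (α_ M M M).inv

/-- `m ⊗ id` on `(M ⊗ M) ⊗ M`. -/
def wm1 {M : ModuleCat.{u} K} (mm : M ⊗ M ⟶ M) : (M ⊗ M) ⊗ M ⟶ M ⊗ M := mm ▷ M

/-- `id ⊗ m` on `(M ⊗ M) ⊗ M`. -/
def wm2 {M : ModuleCat.{u} K} (mm : M ⊗ M ⟶ M) : (M ⊗ M) ⊗ M ⟶ M ⊗ M :=
  (α_ M M M).hom ≫ (M ◁ mm)

namespace QQS
variable {M : ModuleCat.{u} K} (σ : M ⊗ M ⟶ M ⊗ M)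

/-- cast between tensor powers -/
def cT (M : ModuleCat.{u} K) {a b : ℕ} (h : a = b) : Tpow M a ⟶ Tpow M b :=
  eqToHom (congrArg (Tpow M) h)

@[simp] lemma cT_rfl {a : ℕ} : cT M (rfl : a = a) = 𝟙 _ := rfl

lemma eqToHom_cT {a b : ℕ} (h : a = b) (p : Tpow M a = Tpow M b) :
    eqToHom p = cT M h := by subst h; rfl

lemma eqToHom_cT1 {a b : ℕ} (h : a = b+1) (p : Tpow M a = Tpow M b ⊗ M) :
    eqToHom p = cT M h := by subst h; rfl

lemma eqToHom_cT2 {a b : ℕ} (h : a = b+2) (p : Tpow M a = (Tpow M b ⊗ M) ⊗ M) :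
    eqToHom p = cT M h := by subst h; rfl

@[simp] lemma cT_trans {a b c : ℕ} (h : a = b) (h' : b = c) :
    cT M h ≫ cT M h' = cT M (h.trans h') := by subst h; subst h'; simp

lemma cT_irrel {a b : ℕ} (h h' : a = b) : cT M h = cT M h' := rfl

lemma cT_whiskerRight {a b : ℕ} (h : a = b) (h' : a+1 = b+1) :
    (cT M h) ▷ M = cT M h' := by
  subst h
  show (cT M (rfl : a = a)) ▷ M = cT M (rfl : a+1 = a+1)
  rw [cT_rfl, cT_rfl]
  exact MonoidalCategory.id_whiskerRight _ _

lemma cT_conj {a b : ℕ} (h : a = b) (f : ∀ n, Tpow M n ⟶ Tpow M n) :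
    f a ≫ cT M h = cT M h ≫ f b := by subst h; simp

lemma cT_comp_iota {a b : ℕ} (h : a = b) :
    cT M h ≫ iotaT M b = iotaT M a := by subst h; simp

/- sigR equations -/
lemma sigR_succ (n k : ℕ) : sigR σ (n+1) (k+1) = sigR σ n k ▷ M := by
  cases n <;> rfl

lemma sigR_zero2 (n : ℕ) :
    sigR σ (n+2) 0 =
      (α_ (Tpow M n) M M).hom ≫ (Tpow M n ◁ σ) ≫ (α_ (Tpow M n) M M).inv := rfl

lemma sigR_id (n : ℕ) : ∀ k, n ≤ k+1 → sigR σ n k = 𝟙 _ := by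
  induction n with
  | zero => intro k _; rfl
  | succ n ih =>
    intro k hk
    cases k with
    | zero =>
      have hn : n = 0 := by omega
      subst hn; rfl
    | succ k =>
      rw [sigR_succ, ih k (by omega)]
      exact MonoidalCategory.id_whiskerRight _ _

lemma sigR_sq (hsq : σ ≫ σ = 𝟙 (M ⊗ M)) (n : ℕ) : ∀ k, sigR σ n k ≫ sigR σ n k = 𝟙 _ := by
  induction n with
  | zero => intro k; show 𝟙 _ ≫ 𝟙 _ = 𝟙 _; simp
  | succ n ih =>
    intro k
    cases k with
    | zero =>
      cases n with
      | zero => show 𝟙 _ ≫ 𝟙 _ = 𝟙 _; simp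
      | succ m =>
        show ((α_ (Tpow M m) M M).hom ≫ (Tpow M m ◁ σ) ≫ (α_ (Tpow M m) M M).inv) ≫
          ((α_ (Tpow M m) M M).hom ≫ (Tpow M m ◁ σ) ≫ (α_ (Tpow M m) M M).inv) = 𝟙 ((Tpow M m ⊗ M) ⊗ M)
        slice_lhs 3 4 => rw [Iso.inv_hom_id]
        slice_lhs 2 4 => rw [Category.id_comp, ← MonoidalCategory.whiskerLeft_comp, hsq,
          MonoidalCategory.whiskerLeft_id]
        simp
    | succ k =>
      erw [sigR_succ, ← MonoidalCategory.comp_whiskerRight, ih k]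
      exact MonoidalCategory.id_whiskerRight _ _

lemma whisker2_comm_sigR0 {m : ℕ} (g : Tpow M m ⟶ Tpow M m) :
    ((g ▷ M) ▷ M) ≫ sigR σ (m+2) 0 = sigR σ (m+2) 0 ≫ ((g ▷ M) ▷ M) := by
  show ((g ▷ M) ▷ M) ≫ ((α_ (Tpow M m) M M).hom ≫ (Tpow M m ◁ σ) ≫ (α_ (Tpow M m) M M).inv) =
    ((α_ (Tpow M m) M M).hom ≫ (Tpow M m ◁ σ) ≫ (α_ (Tpow M m) M M).inv) ≫ ((g ▷ M) ▷ M)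
  slice_lhs 1 2 => rw [MonoidalCategory.associator_naturality_left]
  slice_lhs 2 3 => rw [← MonoidalCategory.whisker_exchange]
  slice_lhs 3 4 => rw [MonoidalCategory.associator_inv_naturality_left]
  simp

lemma sigR_comm (n : ℕ) : ∀ k k', k'+2 ≤ k →
    sigR σ n k ≫ sigR σ n k' = sigR σ n k' ≫ sigR σ n k := by
  induction n with
  | zero => intro k k' _; show 𝟙 _ ≫ 𝟙 _ = 𝟙 _ ≫ 𝟙 _; simp
  | succ n ih =>
    intro k k' hk
    obtain ⟨k1, rfl⟩ : ∃ m, k = m+1 := ⟨k-1, by omega⟩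
    cases k' with
    | succ k'' =>
      obtain ⟨k2, rfl⟩ : ∃ m, k1 = m+1 := ⟨k1-1, by omega⟩
      erw [sigR_succ, sigR_succ, ← MonoidalCategory.comp_whiskerRight,
        ← MonoidalCategory.comp_whiskerRight, ih _ _ (by omega)]
    | zero =>
      cases n with
      | zero =>
        rw [sigR_id σ 1 (k1+1) (by omega), show sigR σ 1 0 = 𝟙 _ from rfl]
      | succ m =>
        obtain ⟨k2, rfl⟩ : ∃ m2, k1 = m2+1 := ⟨k1-1, by omega⟩
        rw [sigR_succ, sigR_succ]
        exact whisker2_comm_sigR0 σ (sigR σ m k2)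


/- sigAt -/
lemma sigAt_def (n i : ℕ) : sigAt σ n i = sigR σ n (n-1-i) := rfl

lemma sigAt_sq (hsq : σ ≫ σ = 𝟙 (M ⊗ M)) (n i : ℕ) :
    sigAt σ n i ≫ sigAt σ n i = 𝟙 _ := sigR_sq σ hsq n _

lemma sigAt_sq_assoc (hsq : σ ≫ σ = 𝟙 (M ⊗ M)) (n i : ℕ) {X : ModuleCat.{u} K}
    (f : Tpow M n ⟶ X) : sigAt σ n i ≫ sigAt σ n i ≫ f = f := by
  rw [← Category.assoc, sigAt_sq σ hsq, Category.id_comp]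

lemma comp_sigAt_sq (hsq : σ ≫ σ = 𝟙 (M ⊗ M)) {n i : ℕ} {X : ModuleCat.{u} K}
    (f : X ⟶ Tpow M n) : f ≫ sigAt σ n i ≫ sigAt σ n i = f := by
  rw [sigAt_sq σ hsq, Category.comp_id]

lemma sigAt_comm (n a b : ℕ) (h2 : a+2 ≤ b) (h3 : b ≤ n-1) :
    sigAt σ n a ≫ sigAt σ n b = sigAt σ n b ≫ sigAt σ n a :=
  sigR_comm σ n (n-1-a) (n-1-b) (by omega)

lemma sigAt_whisker (n i : ℕ) (h1 : 1 ≤ i) (h2 : i ≤ n-1) :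
    sigAt σ (n+1) i = sigAt σ n i ▷ M := by
  show sigR σ (n+1) (n+1-1-i) = sigR σ n (n-1-i) ▷ M
  rw [show n+1-1-i = (n-1-i)+1 by omega, sigR_succ]

/- asc -/
lemma asc_zero (n b : ℕ) : asc σ n b 0 = 𝟙 _ := rfl
lemma asc_succ (n b l : ℕ) : asc σ n b (l+1) = sigAt σ n b ≫ asc σ n (b+1) l := rfl

lemma asc_append (n : ℕ) : ∀ l b, asc σ n b (l+1) = asc σ n b l ≫ sigAt σ n (b+l) := by
  intro l
  induction l with
  | zero => intro b; rw [asc_succ, asc_zero, asc_zero, Category.comp_id, Category.id_comp, Nat.add_zero]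
  | succ l ih =>
    intro b
    rw [asc_succ, ih (b+1), asc_succ, Category.assoc, show b+1+l = b+(l+1) by omega]

lemma asc_whisker (n : ℕ) : ∀ l b, 1 ≤ b → b+l ≤ n →
    asc σ (n+1) b l = asc σ n b l ▷ M := by
  intro l
  induction l with
  | zero =>
    intro b _ _
    rw [asc_zero, asc_zero]
    exact (MonoidalCategory.id_whiskerRight _ _).symm
  | succ l ih =>
    intro b h1 h2
    erw [asc_succ, asc_succ, sigAt_whisker σ n b h1 (by omega), ih (b+1) (by omega) (by omega),
      ← MonoidalCategory.comp_whiskerRight]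

lemma asc_comm_sigAt (n k : ℕ) (h3 : k ≤ n-1) : ∀ l b, b+l+1 ≤ k →
    asc σ n b l ≫ sigAt σ n k = sigAt σ n k ≫ asc σ n b l := by
  intro l
  induction l with
  | zero => intro b _; rw [asc_zero, Category.comp_id, Category.id_comp]
  | succ l ih =>
    intro b hb
    rw [asc_succ, Category.assoc, ih (b+1) (by omega), ← Category.assoc,
      sigAt_comm σ n b k (by omega) h3, Category.assoc]

/- blockT -/
lemma blockT_zero (j n : ℕ) : blockT σ 0 j n = 𝟙 _ := rfl
lemma blockT_succ (i j n : ℕ) : blockT σ (i+1) j n = asc σ n (i+1) j ≫ blockT σ i j n := rfl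

lemma blockT_q0 (n : ℕ) : ∀ p, blockT σ p 0 n = 𝟙 _ := by
  intro p
  induction p with
  | zero => rfl
  | succ p ih => rw [blockT_succ, asc_zero, ih, Category.comp_id]

lemma blockT_whisker (n q : ℕ) : ∀ p, p + q ≤ n →
    blockT σ p q (n+1) = blockT σ p q n ▷ M := by
  intro p
  induction p with
  | zero =>
    intro _
    rw [blockT_zero, blockT_zero]
    exact (MonoidalCategory.id_whiskerRight _ _).symm
  | succ p ih =>
    intro h
    erw [blockT_succ, blockT_succ, asc_whisker σ n q (p+1) (by omega) (by omega),
      ih (by omega), ← MonoidalCategory.comp_whiskerRight]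

lemma blockT_comm_sigAt (n q k : ℕ) (h3 : k ≤ n-1) : ∀ p, p+q+1 ≤ k →
    blockT σ p q n ≫ sigAt σ n k = sigAt σ n k ≫ blockT σ p q n := by
  intro p
  induction p with
  | zero => rw [blockT_zero]; intro _; rw [Category.comp_id, Category.id_comp]
  | succ p ih =>
    intro h
    rw [blockT_succ, Category.assoc, ih (by omega), ← Category.assoc,
      asc_comm_sigAt σ n k h3 q (p+1) (by omega), Category.assoc]

/- desc -/
def desc (σ : M ⊗ M ⟶ M ⊗ M) (n : ℕ) : (t l : ℕ) → (Tpow M n ⟶ Tpow M n)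
  | _, 0 => 𝟙 _
  | t, l+1 => sigAt σ n (t-1) ≫ desc σ n (t-1) l

lemma desc_zero (n t : ℕ) : desc σ n t 0 = 𝟙 _ := rfl
lemma desc_succ (n t l : ℕ) : desc σ n t (l+1) = sigAt σ n (t-1) ≫ desc σ n (t-1) l := rfl

lemma desc_append (n : ℕ) : ∀ l t, l+1 ≤ t →
    desc σ n t (l+1) = desc σ n t l ≫ sigAt σ n (t-1-l) := by
  intro l
  induction l with
  | zero =>
    intro t _
    rw [desc_succ, desc_zero, desc_zero, Category.comp_id, Category.id_comp, Nat.sub_zero]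
  | succ l ih =>
    intro t ht
    rw [desc_succ, ih (t-1) (by omega), desc_succ, Category.assoc,
      show t-1-1-l = t-1-(l+1) by omega]

lemma desc_whisker (n : ℕ) : ∀ l t, l ≤ t-1 → t ≤ n →
    desc σ (n+1) t l = desc σ n t l ▷ M := by
  intro l
  induction l with
  | zero =>
    intro t _ _
    rw [desc_zero, desc_zero]
    exact (MonoidalCategory.id_whiskerRight _ _).symm
  | succ l ih =>
    intro t h1 h2
    erw [desc_succ, desc_succ, sigAt_whisker σ n (t-1) (by omega) (by omega),
      ih (t-1) (by omega) (by omega), ← MonoidalCategory.comp_whiskerRight]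

lemma desc_asc (hsq : σ ≫ σ = 𝟙 (M ⊗ M)) (n : ℕ) : ∀ l t, l ≤ t →
    desc σ n t l ≫ asc σ n (t-l) l = 𝟙 _ := by
  intro l
  induction l with
  | zero => intro t _; rw [desc_zero, asc_zero, Category.comp_id]
  | succ l ih =>
    intro t ht
    rw [desc_append σ n l t ht, asc_succ, show t-(l+1) = t-1-l by omega, Category.assoc,
      sigAt_sq_assoc σ hsq, show t-1-l+1 = t-l by omega, ih t (by omega)]


lemma keyD (q : ℕ) : ∀ p n, n = p+q+1 →
    blockT σ p (q+1) n = blockT σ p q n ≫ desc σ n n p := by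
  intro p
  induction p with
  | zero =>
    intro n _
    rw [blockT_zero, blockT_zero, desc_zero, Category.comp_id]
  | succ p ih =>
    intro n hn
    obtain ⟨m, rfl⟩ : ∃ m, n = m+1 := ⟨p+q+1, by omega⟩
    have hm : m = p+q+1 := by omega
    erw [blockT_succ, blockT_whisker σ m (q+1) p (by omega), ih m hm,
      MonoidalCategory.comp_whiskerRight,
      ← blockT_whisker σ m q p (by omega),
      ← desc_whisker σ m p m (by omega) (le_refl m),
      asc_append σ (m+1) q (p+1), Category.assoc,
      ← Category.assoc (sigAt σ (m+1) (p+1+q)),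
      show p+1+q = p+q+1 by omega,
      ← blockT_comm_sigAt σ (m+1) q (p+q+1) (by omega) p (by omega),
      Category.assoc]
    rw [show desc σ (m+1) (m+1) (p+1) = sigAt σ (m+1) m ≫ desc σ (m+1) m p from rfl, hm]
    rw [← Category.assoc, ← blockT_succ]
    rfl

lemma keyW1 (hsq : σ ≫ σ = 𝟙 (M ⊗ M)) (p q n : ℕ) (h : n = p+q+1) :
    blockT σ p (q+1) n ≫ asc σ n (q+1) p = blockT σ p q n := by
  rw [keyD σ q p n h, Category.assoc, show q+1 = n-p by omega,
    desc_asc σ hsq n p n (by omega), Category.comp_id]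

lemma keyW2 (hsq : σ ≫ σ = 𝟙 (M ⊗ M)) (p q n : ℕ) (h : n = p+q+2) :
    blockT σ (p+1) (q+1) n ≫ asc σ n (q+1) p
      = blockT σ (p+1) q n ≫ sigAt σ n (p+q+1) := by
  have w1 := keyW1 σ hsq (p+1) q n (by omega)
  rw [asc_append σ n p (q+1)] at w1
  have w2 := congrArg (fun f => f ≫ sigAt σ n (q+1+p)) w1
  simp only [Category.assoc] at w2
  rw [comp_sigAt_sq σ hsq] at w2
  rw [show q+1+p = p+q+1 by omega] at w2
  exact w2

lemma cT_trans_assoc {a b c : ℕ} (h : a = b) (h' : b = c) {X : ModuleCat.{u} K}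
    (g : Tpow M c ⟶ X) : cT M h ≫ cT M h' ≫ g = cT M (h.trans h') ≫ g := by
  subst h; subst h'; rfl

lemma cT_conj_assoc {a b : ℕ} (h : a = b) (f : ∀ n, Tpow M n ⟶ Tpow M n)
    {X : ModuleCat.{u} K} (g : Tpow M b ⟶ X) :
    f a ≫ cT M h ≫ g = cT M h ≫ f b ≫ g := by
  subst h; simp

lemma keyW1_assoc (hsq : σ ≫ σ = 𝟙 (M ⊗ M)) (p q n : ℕ) (h : n = p+q+1)
    {X : ModuleCat.{u} K} (g : Tpow M n ⟶ X) :
    blockT σ p (q+1) n ≫ asc σ n (q+1) p ≫ g = blockT σ p q n ≫ g := by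
  rw [← Category.assoc, keyW1 σ hsq p q n h]

lemma keyW2_assoc (hsq : σ ≫ σ = 𝟙 (M ⊗ M)) (p q n : ℕ) (h : n = p+q+2)
    {X : ModuleCat.{u} K} (g : Tpow M n ⟶ X) :
    blockT σ (p+1) (q+1) n ≫ asc σ n (q+1) p ≫ g
      = blockT σ (p+1) q n ≫ sigAt σ n (p+q+1) ≫ g := by
  rw [← Category.assoc, keyW2 σ hsq p q n h, Category.assoc]

lemma whiskerL_tensor {a : ℕ} {B C X : ModuleCat.{u} K} (f : Tpow M a ⟶ B)
    (g : M ⊗ M ⟶ C) (h : B ⊗ C ⟶ X) :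
    (Tpow M a ◁ σ) ≫ (f ⊗ₘ g) ≫ h = (f ⊗ₘ (σ ≫ g)) ≫ h := by
  rw [← Category.assoc, ← MonoidalCategory.id_tensorHom, MonoidalCategory.tensorHom_comp_tensorHom,
    Category.id_comp]

lemma sig_top_comp {a : ℕ} {B C X : ModuleCat.{u} K} (f : Tpow M a ⟶ B)
    (g : M ⊗ M ⟶ C) (h : B ⊗ C ⟶ X) :
    sigR σ (a+1+1) 0 ≫ (α_ (Tpow M a) M M).hom ≫ (f ⊗ₘ g) ≫ h
      = (α_ (Tpow M a) M M).hom ≫ (f ⊗ₘ (σ ≫ g)) ≫ h := by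
  show ((α_ (Tpow M a) M M).hom ≫ (Tpow M a ◁ σ) ≫ (α_ (Tpow M a) M M).inv) ≫
    (α_ (Tpow M a) M M).hom ≫ (f ⊗ₘ g) ≫ h = _
  simp only [Category.assoc, Iso.inv_hom_id_assoc]
  rw [whiskerL_tensor]

lemma tensor_split {A B C D X : ModuleCat.{u} K} (x : A ⟶ B) (f : B ⟶ C)
    (g : M ⊗ M ⟶ D) (h : C ⊗ D ⟶ X) :
    ((x ≫ f) ⊗ₘ g) ≫ h = (x ▷ (M ⊗ M)) ≫ (f ⊗ₘ g) ≫ h := by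
  rw [← Category.assoc, ← MonoidalCategory.tensorHom_id, MonoidalCategory.tensorHom_comp_tensorHom,
    Category.id_comp]

end QQS

set_option maxHeartbeats 3200000 in
theorem stmt19 {M : ModuleCat.{u} K} (σ : M ⊗ M ⟶ M ⊗ M) (mm : M ⊗ M ⟶ M)
    (η : 𝟙_ (ModuleCat K) ⟶ M)
    -- `(M, mm, σ)` is a Yang–Baxter algebra:
    (hiso : IsIso σ)
    (hYB : w1 σ ≫ w2 σ ≫ w1 σ = w2 σ ≫ w1 σ ≫ w2 σ)
    (hassoc : wm1 mm ≫ mm = wm2 mm ≫ mm)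
    (hc1 : w2 σ ≫ w1 σ ≫ wm2 mm = wm1 mm ≫ σ)
    (hc2 : w1 σ ≫ w2 σ ≫ wm1 mm = wm2 mm ≫ σ)
    (hul : (λ_ M).inv ≫ (η ▷ M) ≫ mm = 𝟙 M)
    (hur : (ρ_ M).inv ≫ (M ◁ η) ≫ mm = 𝟙 M)
    (hσu1 : (λ_ M).inv ≫ (η ▷ M) ≫ σ = (ρ_ M).inv ≫ (M ◁ η))
    (hσu2 : (ρ_ M).inv ≫ (M ◁ η) ≫ σ = (λ_ M).inv ≫ (η ▷ M))
    -- twisted commutativity and involutivity: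
    (hcomm : σ ≫ mm = mm) (hsq : σ ≫ σ = 𝟙 (M ⊗ M))
    -- `J i j` is the component `⋈_{σ(i,j)}` of the quantum quasi-shuffle product,
    -- characterized by the inductive formula (1):
    (J : ∀ i j : ℕ, (Tpow M (i+j) ⟶ TTc M))
    (hJr : ∀ i : ℕ, J i 0 = iotaT M i)
    (hJl : ∀ j : ℕ, J 0 j
      = eqToHom (show Tpow M (0+j) = Tpow M j by rw [Nat.zero_add]) ≫ iotaT M j)
    (hJrec : ∀ i j : ℕ,
      J (i+1) (j+1) =
        (((J (i+1) j ⊗ₘ 𝟙 M) ≫ concatR M : Tpow M ((i+1)+(j+1)) ⟶ TTc M)) +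
        (asc σ ((i+1)+(j+1)) (i+1) (j+1) ≫
          eqToHom (show Tpow M ((i+1)+(j+1)) = Tpow M (i+(j+1)) ⊗ M by
            rw [show (i+1)+(j+1) = (i+(j+1))+1 by omega]; rfl) ≫
          (J i (j+1) ⊗ₘ 𝟙 M) ≫ concatR M) +
        (asc σ ((i+1)+(j+1)) (i+1) j ≫
          eqToHom (show Tpow M ((i+1)+(j+1)) = (Tpow M (i+j) ⊗ M) ⊗ M by
            rw [show (i+1)+(j+1) = ((i+j)+1)+1 by omega]; rfl) ≫
          (α_ (Tpow M (i+j)) M M).hom ≫ (J i j ⊗ₘ mm) ≫ concatR M)) :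
    -- the quantum quasi-shuffle product is twisted commutative:
    ∀ i j : ℕ,
      blockT σ i j (i+j) ≫
        eqToHom (show Tpow M (i+j) = Tpow M (j+i) by rw [Nat.add_comm]) ≫ J j i
      = J i j := by
  intro i j
  induction i generalizing j with
  | zero =>
    rw [hJr j, hJl j, QQS.blockT_zero, Category.id_comp,
      QQS.eqToHom_cT (show 0+j = j+0 by omega)]
  | succ i ihi =>
    induction j with
    | zero =>
      rw [hJl (i+1), hJr (i+1), QQS.blockT_q0, Category.id_comp,
        QQS.eqToHom_cT (show (i+1)+0 = 0+(i+1) by omega),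
        QQS.eqToHom_cT (show 0+(i+1) = i+1 by omega),
        QQS.cT_comp_iota, QQS.cT_comp_iota]
    | succ j ihj =>
      rw [hJrec j i, hJrec i j]
      simp only [Preadditive.comp_add, Category.assoc]
      erw [QQS.eqToHom_cT (show i+1+(j+1) = j+1+(i+1) by omega),
        QQS.eqToHom_cT1 (show j+1+(i+1) = j+(i+1)+1 by omega),
        QQS.eqToHom_cT1 (show i+1+(j+1) = i+(j+1)+1 by omega)]
      -- preprocess induction hypotheses
      rw [QQS.eqToHom_cT (show i+1+j = j+(i+1) by omega)] at ihj
      have ih1 := ihi (j+1)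
      rw [QQS.eqToHom_cT (show i+(j+1) = j+1+i by omega)] at ih1
      have ih0 := ihi j
      rw [QQS.eqToHom_cT (show i+j = j+i by omega)] at ih0
      have eqA : blockT σ (i+1) (j+1) (i+1+(j+1))
            ≫ QQS.cT M (show i+1+(j+1) = j+1+(i+1) by omega)
            ≫ (J (j+1) i ⊗ₘ 𝟙 M) ≫ concatR M
          = asc σ (i+1+(j+1)) (i+1) (j+1)
            ≫ QQS.cT M (show i+1+(j+1) = i+(j+1)+1 by omega)
            ≫ (J i (j+1) ⊗ₘ 𝟙 M) ≫ concatR M := by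
        have hblk : blockT σ i (j+1) (i+1+j)
              ≫ QQS.cT M (show i+1+j = j+1+i by omega) ≫ J (j+1) i
            = QQS.cT M (show i+1+j = i+(j+1) by omega) ≫ J i (j+1) := by
          rw [← QQS.cT_trans_assoc (show i+1+j = i+(j+1) by omega)
              (show i+(j+1) = j+1+i by omega),
            QQS.cT_conj_assoc (show i+1+j = i+(j+1) by omega)
              (fun n => blockT σ i (j+1) n), ih1]
        show blockT σ (i+1) (j+1) (i+1+j+1)
            ≫ QQS.cT M (show i+1+j+1 = j+1+i+1 by omega)
            ≫ (J (j+1) i ⊗ₘ 𝟙 M) ≫ concatR M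
          = asc σ (i+1+j+1) (i+1) (j+1)
            ≫ QQS.cT M (show i+1+j+1 = i+(j+1)+1 by omega)
            ≫ (J i (j+1) ⊗ₘ 𝟙 M) ≫ concatR M
        rw [QQS.blockT_succ, QQS.blockT_whisker σ (i+1+j) (j+1) i (by omega)]
        simp only [MonoidalCategory.tensorHom_id, Category.assoc]
        rw [← QQS.cT_whiskerRight (show i+1+j = j+1+i by omega)
            (show i+1+j+1 = j+1+i+1 by omega)]
        rw [← QQS.cT_whiskerRight (show i+1+j = i+(j+1) by omega)
            (show i+1+j+1 = i+(j+1)+1 by omega)]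
        exact congrArg (asc σ (i+1+j+1) (i+1) (j+1) ≫ ·) (by
          rw [← MonoidalCategory.comp_whiskerRight_assoc (QQS.cT M _) (J (j+1) i),
            ← MonoidalCategory.comp_whiskerRight_assoc (blockT σ i (j+1) (i+1+j)), hblk,
            MonoidalCategory.comp_whiskerRight_assoc] :
          blockT σ i (j+1) (i+1+j) ▷ M ≫ QQS.cT M (show i+1+j = j+1+i by omega) ▷ M
            ≫ J (j+1) i ▷ M ≫ concatR M
          = QQS.cT M (show i+1+j = i+(j+1) by omega) ▷ M ≫ J i (j+1) ▷ M ≫ concatR M)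
      have eqB : blockT σ (i+1) (j+1) (i+1+(j+1))
            ≫ QQS.cT M (show i+1+(j+1) = j+1+(i+1) by omega)
            ≫ asc σ (j+1+(i+1)) (j+1) (i+1)
            ≫ QQS.cT M (show j+1+(i+1) = j+(i+1)+1 by omega)
            ≫ (J j (i+1) ⊗ₘ 𝟙 M) ≫ concatR M
          = (J (i+1) j ⊗ₘ 𝟙 M) ≫ concatR M := by
        show blockT σ (i+1) (j+1) (i+1+j+1)
            ≫ QQS.cT M (show i+1+j+1 = j+1+i+1 by omega)
            ≫ asc σ (j+1+i+1) (j+1) (i+1)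
            ≫ QQS.cT M (show j+1+i+1 = j+(i+1)+1 by omega)
            ≫ (J j (i+1) ⊗ₘ 𝟙 M) ≫ concatR M
          = (J (i+1) j ⊗ₘ 𝟙 M) ≫ concatR M
        rw [← QQS.cT_conj_assoc (show i+1+j+1 = j+1+i+1 by omega)
            (fun n => asc σ n (j+1) (i+1))]
        rw [QQS.cT_trans_assoc]
        rw [QQS.keyW1_assoc σ hsq (i+1) j (i+1+j+1) (by omega)]
        rw [QQS.blockT_whisker σ (i+1+j) j (i+1) (by omega)]
        simp only [MonoidalCategory.tensorHom_id, Category.assoc]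
        rw [← QQS.cT_whiskerRight (show i+1+j = j+(i+1) by omega)
            (show i+1+j+1 = j+(i+1)+1 by omega)]
        exact (by
          rw [← MonoidalCategory.comp_whiskerRight_assoc (QQS.cT M _) (J j (i+1)),
            ← MonoidalCategory.comp_whiskerRight_assoc (blockT σ (i+1) j (i+1+j)), ihj] :
          blockT σ (i+1) j (i+1+j) ▷ M ≫ QQS.cT M (show i+1+j = j+(i+1) by omega) ▷ M
            ≫ J j (i+1) ▷ M ≫ concatR M = J (i+1) j ▷ M ≫ concatR M)
      have eqC : blockT σ (i+1) (j+1) (i+1+(j+1))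
            ≫ QQS.cT M (show i+1+(j+1) = j+1+(i+1) by omega)
            ≫ asc σ (j+1+(i+1)) (j+1) i
            ≫ QQS.cT M (show j+1+(i+1) = j+(i+1)+1 by omega)
            ≫ (α_ (Tpow M (j+i)) M M).hom ≫ (J j i ⊗ₘ mm) ≫ concatR M
          = asc σ (i+1+(j+1)) (i+1) j
            ≫ QQS.cT M (show i+1+(j+1) = i+(j+1)+1 by omega)
            ≫ (α_ (Tpow M (i+j)) M M).hom ≫ (J i j ⊗ₘ mm) ≫ concatR M := by
        show blockT σ (i+1) (j+1) (i+1+j+1)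
            ≫ QQS.cT M (show i+1+j+1 = j+1+i+1 by omega)
            ≫ asc σ (j+1+i+1) (j+1) i
            ≫ QQS.cT M (show j+1+i+1 = j+i+1+1 by omega)
            ≫ (α_ (Tpow M (j+i)) M M).hom ≫ (J j i ⊗ₘ mm) ≫ concatR M
          = asc σ (i+1+j+1) (i+1) j
            ≫ QQS.cT M (show i+1+j+1 = i+j+1+1 by omega)
            ≫ (α_ (Tpow M (i+j)) M M).hom ≫ (J i j ⊗ₘ mm) ≫ concatR M
        rw [← QQS.cT_conj_assoc (show i+1+j+1 = j+1+i+1 by omega)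
            (fun n => asc σ n (j+1) i)]
        rw [QQS.cT_trans_assoc]
        rw [QQS.keyW2_assoc σ hsq i j (i+1+j+1) (by omega)]
        rw [QQS.cT_conj_assoc (show i+1+j+1 = j+i+1+1 by omega)
            (fun n => sigAt σ n (i+j+1))]
        rw [show sigAt σ (j+i+1+1) (i+j+1) = sigR σ (j+i+1+1) (j+i+1+1-1-(i+j+1)) from rfl,
          show j+i+1+1-1-(i+j+1) = 0 by omega]
        rw [QQS.sig_top_comp, hcomm]
        -- LHS now: blockT σ (i+1) j (i+1+j+1) ≫ cT ≫ α ≫ (J j i ⊗ₘ mm) ≫ concatR M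
        rw [QQS.blockT_succ]
        -- work on RHS
        conv_rhs => rw [← ih0]
        rw [QQS.tensor_split, QQS.tensor_split]
        refine (Category.assoc _ _ _).trans (congrArg (asc σ (i+1+j+1) (i+1) j ≫ ·) ?_)
        have e1 : blockT σ i j (i+j+1+1) = (blockT σ i j (i+j) ▷ M) ▷ M :=
          (QQS.blockT_whisker σ (i+j+1) j i (by omega)).trans
            (congrArg (· ▷ M) (QQS.blockT_whisker σ (i+j) j i (by omega)))
        have e2 : QQS.cT M (show i+j+1+1 = j+i+1+1 by omega)
            = (QQS.cT M (show i+j = j+i by omega) ▷ M) ▷ M :=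
          (QQS.cT_whiskerRight (show i+j+1 = j+i+1 by omega)
              (show i+j+1+1 = j+i+1+1 by omega)).symm.trans
            (congrArg (· ▷ M) (QQS.cT_whiskerRight (show i+j = j+i by omega)
              (show i+j+1 = j+i+1 by omega)).symm)
        exact ((congrArg (blockT σ i j (i+1+j+1) ≫ ·)
            (QQS.cT_trans_assoc (show i+1+j+1 = i+j+1+1 by omega)
              (show i+j+1+1 = j+i+1+1 by omega) _)).symm.trans
          (QQS.cT_conj_assoc (show i+1+j+1 = i+j+1+1 by omega) (fun n => blockT σ i j n) _)).trans
          (congrArg (QQS.cT M (show i+1+j+1 = i+j+1+1 by omega) ≫ ·)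
            ((congrArg₂ (fun (p : Tpow M (i+j+1+1) ⟶ Tpow M (i+j+1+1))
                (q : Tpow M (i+j+1+1) ⟶ Tpow M (j+i+1+1)) =>
                p ≫ q ≫ (α_ (Tpow M (j+i)) M M).hom ≫ (J j i ⊗ₘ mm) ≫ concatR M) e1 e2).trans
              ((congrArg (((blockT σ i j (i+j) ▷ M) ▷ M) ≫ ·)
                (MonoidalCategory.associator_naturality_left_assoc
                  (QQS.cT M (show i+j = j+i by omega)) M M ((J j i ⊗ₘ mm) ≫ concatR M))).trans
                (MonoidalCategory.associator_naturality_left_assoc (blockT σ i j (i+j)) M M _))))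
      erw [eqA, eqB, eqC]
      exact congrArg (· + _) (add_comm _ _)
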